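/- Fix a field k and r ∈ ℕ, and let A^r be the r-th principal module over k[I]. Let M be any k[I]-module and let x ∈ M be an element satisfying α_i · x = x for all i > r (i.e., x is fixed by the submonoid I_{>r}). Then there exists a unique k[I]-linear map f : A^r → M such that f(e_{1,2,…,r}) = x. Consequently Hom_{k[I]}(A^r, M) is canonically isomorphic to the set of I_{>r}-fixed vectors of M. -/

import Mathlib

open scoped Classical

noncomputable section

/-- The increasing monoid `I`: the submonoid of `Function.End ℕ+` (functions under
composition) consisting of strictly increasing functions `σ : ℕ+ → ℕ+` such that
`σ n = n + ℓ` for some `ℓ` and all sufficiently large `n`. -/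
def IncMonoid : Submonoid (Function.End ℕ+) where
  carrier := {f | StrictMono f ∧ ∃ (l : ℕ) (N : ℕ+), ∀ n : ℕ+, N ≤ n → ((f n : ℕ) = (n : ℕ) + l)}
  one_mem' := ⟨fun _ _ h => h, 0, 1, fun n _ => by show ((n : ℕ+) : ℕ) = (n : ℕ) + 0; omega⟩
  mul_mem' := by
    rintro f g ⟨hf1, lf, Nf, hf2⟩ ⟨hg1, lg, Ng, hg2⟩
    refine ⟨hf1.comp hg1, lg + lf, max Nf Ng, fun n hn => ?_⟩
    have h1 : (g n : ℕ) = (n : ℕ) + lg := hg2 n (le_trans (le_max_right _ _) hn)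
    have h2 : Nf ≤ g n := by
      rw [← PNat.coe_le_coe, h1]
      have : (Nf : ℕ) ≤ (n : ℕ) := (PNat.coe_le_coe _ _).2 (le_trans (le_max_left _ _) hn)
      omega
    have h3 := hf2 (g n) h2
    show ((f (g n) : ℕ)) = (n : ℕ) + (lg + lf)
    omega

/-- The increasing monoid, as a type. -/
abbrev IncM : Type := IncMonoid

theorem IncM.strictMono (σ : IncM) : StrictMono σ.1 := σ.2.1

theorem IncM.le_apply (σ : IncM) (n : ℕ+) : n ≤ σ.1 n := by
  induction n using PNat.recOn with
  | one => exact (σ.1 1).one_le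
  | succ n ih =>
      have h2 : σ.1 n < σ.1 (n + 1) := σ.strictMono (by rw [← PNat.coe_lt_coe]; push_cast; omega)
      rw [← PNat.coe_le_coe] at *
      rw [← PNat.coe_lt_coe] at h2
      push_cast at *
      omega

/-- The underlying function of the generator `α_k`. -/
def alphaFun (k : ℕ+) : Function.End ℕ+ := fun n => if n < k then n else n + 1

theorem alphaFun_strictMono (k : ℕ+) : StrictMono (alphaFun k) := by
  intro a b hab
  unfold alphaFun
  split_ifs with h1 h2 <;>
    rw [← PNat.coe_lt_coe] at * <;> push_cast at * <;> omega

theorem alphaFun_mem (k : ℕ+) : alphaFun k ∈ IncMonoid := by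
  refine ⟨alphaFun_strictMono k, 1, k, fun n hn => ?_⟩
  unfold alphaFun
  rw [if_neg (not_lt.2 hn)]
  push_cast
  ring

/-- The generator `α_k` of the increasing monoid (`k ≥ 1`). -/
def alpha (k : ℕ+) : IncM := ⟨alphaFun k, alphaFun_mem k⟩

/-- The submonoid `I_{≥ n}` of `I` generated by the `α_i` with `i ≥ n`. -/
def Iges (n : ℕ+) : Submonoid IncM := Submonoid.closure (alpha '' Set.Ici n)

/-- The submonoid `I_{> n}` of `I` generated by the `α_i` with `i > n`. -/
def Igt (n : ℕ) : Submonoid IncM := Submonoid.closure {s | ∃ i : ℕ+, n < (i : ℕ) ∧ s = alpha i}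

/-- The monoid algebra `k[I]` of the increasing monoid. -/
abbrev IncAlg (k : Type*) [Field k] : Type _ := MonoidAlgebra k IncM

/-- The image of `σ ∈ I` in the monoid algebra `k[I]`. -/
abbrev ofInc (k : Type*) [Field k] (σ : IncM) : IncAlg k := MonoidAlgebra.of k IncM σ

/-- A `k[I]`-module is smooth if every vector is fixed by some `I_{>n}`. -/
def IsSmoothMod (k : Type*) [Field k] (M : Type*) [AddCommMonoid M]
    [Module (IncAlg k) M] : Prop :=
  ∀ x : M, ∃ n : ℕ, ∀ σ ∈ Igt n, ofInc k σ • x = x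

/-! ### The principal modules `A^r` -/

/-- Index set for the basis of the principal module `A^r`:
strictly increasing `r`-tuples of positive integers. -/
def Idx (r : ℕ) : Type := {v : Fin r → ℕ+ // StrictMono v}

/-- The action of `σ ∈ I` on the index set of `A^r`. -/
def idxAct {r : ℕ} (σ : IncM) (t : Idx r) : Idx r :=
  ⟨σ.1 ∘ t.1, (IncM.strictMono σ).comp t.2⟩

/-- The representation of the increasing monoid on the principal module `A^r`. -/
def prinRep (k : Type*) [Field k] (r : ℕ) : Representation k IncM (Idx r →₀ k) where
  toFun σ := Finsupp.lmapDomain k k (idxAct σ)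
  map_one' := LinearMap.ext fun v => by
    have h : (idxAct (1 : IncM) : Idx r → Idx r) = id := funext fun t => rfl
    simp [Finsupp.lmapDomain_apply, h, Finsupp.mapDomain_id]
  map_mul' := fun σ τ => LinearMap.ext fun v => by
    have h : (idxAct (σ * τ) : Idx r → Idx r) = (idxAct σ) ∘ (idxAct τ) :=
      funext fun t => rfl
    show Finsupp.lmapDomain k k (idxAct (σ * τ)) v =
      Finsupp.lmapDomain k k (idxAct σ) (Finsupp.lmapDomain k k (idxAct τ) v)
    simp [Finsupp.lmapDomain_apply, h, Finsupp.mapDomain_comp]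

/-- The principal module `A^r`, as a module over the monoid algebra `k[I]`. -/
abbrev PrinMod (k : Type*) [Field k] (r : ℕ) : Type _ := (prinRep k r).asModule

/-- The basis vector `e_t` of the principal module `A^r`. -/
def ePrin (k : Type*) [Field k] {r : ℕ} (t : Idx r) : PrinMod k r :=
  (prinRep k r).asModuleEquiv.symm (Finsupp.single t 1)

/-- The tuple `(1, 2, …, r)` indexing the canonical generator `e_{1,…,r}` of `A^r`. -/
def iotaIdx (r : ℕ) : Idx r :=
  ⟨fun i => ⟨(i : ℕ) + 1, Nat.succ_pos _⟩, fun a b h => by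
    show (a : ℕ) + 1 < (b : ℕ) + 1; exact Nat.succ_lt_succ h⟩

/-! ### The simple modules `B^n` -/

/-- `σ ∈ I` fixes the natural number `n`, with the convention `σ 0 = 0`. -/
def fixesNat (σ : IncM) (n : ℕ) : Prop := ∀ h : 0 < n, σ.1 ⟨n, h⟩ = ⟨n, h⟩

theorem fixesNat_mul (σ τ : IncM) (n : ℕ) :
    fixesNat (σ * τ) n ↔ fixesNat σ n ∧ fixesNat τ n := by
  rcases Nat.eq_zero_or_pos n with h0 | h0
  · subst h0
    constructor
    · exact fun _ => ⟨fun h => absurd h (lt_irrefl 0), fun h => absurd h (lt_irrefl 0)⟩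
    · exact fun _ h => absurd h (lt_irrefl 0)
  · set p : ℕ+ := ⟨n, h0⟩
    have happ : ∀ h : 0 < n, (σ * τ).1 ⟨n, h⟩ = σ.1 (τ.1 ⟨n, h⟩) := fun _ => rfl
    constructor
    · intro h
      have hfix : σ.1 (τ.1 p) = p := h h0
      have h1 : p ≤ τ.1 p := τ.le_apply p
      have h2 : τ.1 p ≤ σ.1 (τ.1 p) := σ.le_apply _
      have hτp : τ.1 p = p := le_antisymm (h2.trans_eq hfix) h1
      have hσp : σ.1 p = p := by rw [hτp] at hfix; exact hfix
      exact ⟨fun _ => hσp, fun _ => hτp⟩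
    · rintro ⟨hσ, hτ⟩ h
      rw [happ h]
      have := hτ h0
      rw [this, hσ h0]

/-- The representation of the increasing monoid on the simple module `B^n`:
`σ` acts by the identity if `σ(n) = n` (with `σ(0) = 0`) and by `0` otherwise. -/
def bRep (k : Type*) [Field k] (n : ℕ) : Representation k IncM k where
  toFun σ := if fixesNat σ n then 1 else 0
  map_one' := by
    try dsimp only
    rw [if_pos]
    intro h
    rfl
  map_mul' := fun σ τ => by
    try dsimp only
    by_cases hσ : fixesNat σ n
    · by_cases hτ : fixesNat τ n
      · rw [if_pos ((fixesNat_mul σ τ n).2 ⟨hσ, hτ⟩), if_pos hσ, if_pos hτ, one_mul]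
      · rw [if_neg (fun h => hτ ((fixesNat_mul σ τ n).1 h).2), if_pos hσ, if_neg hτ, one_mul]
    · by_cases hτ : fixesNat τ n
      · rw [if_neg (fun h => hσ ((fixesNat_mul σ τ n).1 h).1), if_neg hσ, if_pos hτ, mul_one]
      · rw [if_neg (fun h => hσ ((fixesNat_mul σ τ n).1 h).1), if_neg hσ, if_neg hτ, mul_zero]

/-- The simple module `B^n`, as a module over the monoid algebra `k[I]`. -/
abbrev BMod (k : Type*) [Field k] (n : ℕ) : Type _ := (bRep k n).asModule

/-! ### Auxiliary lemmas for the universal property -/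

lemma pnat_coe_one_le (n : ℕ+) : 1 ≤ (n : ℕ) := n.one_le

lemma alpha_pow_coe (a : ℕ+) (m : ℕ) (n : ℕ+) :
    ((((alpha a) ^ m : IncM).1 n : ℕ+) : ℕ) =
      if (n : ℕ) < (a : ℕ) then (n : ℕ) else (n : ℕ) + m := by
  induction m generalizing n with
  | zero =>
      have h : ((alpha a) ^ 0 : IncM).1 n = n := by rw [pow_zero]; rfl
      rw [h]; split_ifs <;> omega
  | succ m ih =>
      have h1 : ((alpha a) ^ (m + 1) : IncM).1 n
          = ((alpha a) ^ m : IncM).1 ((alpha a).1 n) := by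
        rw [pow_succ]; rfl
      rw [h1]
      by_cases h : n < a
      · have h2 : (alpha a).1 n = n := if_pos h
        rw [h2, ih]
        rw [← PNat.coe_lt_coe] at h
        simp [h]
      · have h2 : (alpha a).1 n = n + 1 := if_neg h
        rw [h2, ih]
        have hco : ((n + 1 : ℕ+) : ℕ) = (n : ℕ) + 1 := rfl
        rw [← PNat.coe_lt_coe] at h
        rw [hco]
        split_ifs <;> omega

lemma alpha_pow_mem_Igt (r m : ℕ) :
    ((alpha ⟨r + 1, Nat.succ_pos r⟩) ^ m : IncM) ∈ Igt r := by
  have h : (alpha ⟨r + 1, Nat.succ_pos r⟩ : IncM)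
      ∈ {s : IncM | ∃ i : ℕ+, r < (i : ℕ) ∧ s = alpha i} :=
    ⟨⟨r + 1, Nat.succ_pos r⟩, Nat.lt_succ_self r, rfl⟩
  exact pow_mem (Submonoid.subset_closure h) m

lemma key_smul {k : Type*} [Field k] {r : ℕ} {M : Type*} [AddCommGroup M]
    [Module (IncAlg k) M] (x : M) (hx : ∀ σ ∈ Igt r, ofInc k σ • x = x)
    (τ₁ τ₂ : IncM) (h : ∀ n : ℕ+, (n : ℕ) ≤ r → τ₁.1 n = τ₂.1 n) :
    ofInc k τ₁ • x = ofInc k τ₂ • x := by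
  obtain ⟨l₁, N₁, h₁⟩ := τ₁.2.2
  obtain ⟨l₂, N₂, h₂⟩ := τ₂.2.2
  set a : ℕ+ := ⟨r + 1, Nat.succ_pos r⟩ with ha
  have hac : (a : ℕ) = r + 1 := rfl
  set m₁ : ℕ := (N₁ : ℕ) + (N₂ : ℕ) + l₂ with hm₁
  set m₂ : ℕ := (N₁ : ℕ) + (N₂ : ℕ) + l₁ with hm₂
  have heq : τ₁ * (alpha a) ^ m₁ = τ₂ * (alpha a) ^ m₂ := by
    apply Subtype.ext
    funext n
    have e₁ : (τ₁ * (alpha a) ^ m₁).1 n = τ₁.1 (((alpha a) ^ m₁ : IncM).1 n) := rfl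
    have e₂ : (τ₂ * (alpha a) ^ m₂).1 n = τ₂.1 (((alpha a) ^ m₂ : IncM).1 n) := rfl
    rw [e₁, e₂]
    have hn1 := pnat_coe_one_le n
    by_cases hn : (n : ℕ) < (a : ℕ)
    · have g₁ : ((alpha a) ^ m₁ : IncM).1 n = n := by
        apply PNat.coe_injective
        rw [alpha_pow_coe, if_pos hn]
      have g₂ : ((alpha a) ^ m₂ : IncM).1 n = n := by
        apply PNat.coe_injective
        rw [alpha_pow_coe, if_pos hn]
      rw [g₁, g₂]
      exact h n (by rw [hac] at hn; omega)
    · set p₁ := ((alpha a) ^ m₁ : IncM).1 n with hp₁def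
      set p₂ := ((alpha a) ^ m₂ : IncM).1 n with hp₂def
      have hp₁ : (p₁ : ℕ) = (n : ℕ) + m₁ := by rw [hp₁def, alpha_pow_coe, if_neg hn]
      have hp₂ : (p₂ : ℕ) = (n : ℕ) + m₂ := by rw [hp₂def, alpha_pow_coe, if_neg hn]
      have hN₁ : N₁ ≤ p₁ := by
        rw [← PNat.coe_le_coe, hp₁, hm₁]; omega
      have hN₂ : N₂ ≤ p₂ := by
        rw [← PNat.coe_le_coe, hp₂, hm₂]; omega
      have v₁ : (τ₁.1 p₁ : ℕ) = (n : ℕ) + m₁ + l₁ := by rw [h₁ p₁ hN₁, hp₁]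
      have v₂ : (τ₂.1 p₂ : ℕ) = (n : ℕ) + m₂ + l₂ := by rw [h₂ p₂ hN₂, hp₂]
      apply PNat.coe_injective
      rw [v₁, v₂]; omega
  have k₁ := hx _ (alpha_pow_mem_Igt r m₁)
  have k₂ := hx _ (alpha_pow_mem_Igt r m₂)
  calc ofInc k τ₁ • x
      = ofInc k τ₁ • (ofInc k ((alpha a) ^ m₁) • x) := by rw [k₁]
    _ = (ofInc k τ₁ * ofInc k ((alpha a) ^ m₁)) • x := (mul_smul _ _ _).symm
    _ = ofInc k (τ₁ * (alpha a) ^ m₁) • x :=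
          congrArg (fun z : IncAlg k => z • x)
            (map_mul (MonoidAlgebra.of k IncM) τ₁ ((alpha a) ^ m₁)).symm
    _ = ofInc k (τ₂ * (alpha a) ^ m₂) • x := by rw [heq]
    _ = (ofInc k τ₂ * ofInc k ((alpha a) ^ m₂)) • x :=
          congrArg (fun z : IncAlg k => z • x)
            (map_mul (MonoidAlgebra.of k IncM) τ₂ ((alpha a) ^ m₂))
    _ = ofInc k τ₂ • (ofInc k ((alpha a) ^ m₂) • x) := mul_smul _ _ _
    _ = ofInc k τ₂ • x := by rw [k₂]

lemma idx_ge {r : ℕ} (t : Idx r) : ∀ v : ℕ, ∀ h : v < r, v + 1 ≤ ((t.1 ⟨v, h⟩ : ℕ+) : ℕ) := by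
  intro v
  induction v with
  | zero => intro h; exact (t.1 ⟨0, h⟩).2
  | succ j ih =>
      intro h
      have h1 : j < r := by omega
      have h2 := ih h1
      have h3 : t.1 ⟨j, h1⟩ < t.1 ⟨j + 1, h⟩ := t.2 (by simp [Fin.lt_def])
      rw [← PNat.coe_lt_coe] at h3
      omega

/-- The eventual shift of the canonical element of `I` attached to a tuple. -/
def tShift {r : ℕ} (t : Idx r) : ℕ :=
  if h : 0 < r then ((t.1 ⟨r - 1, by omega⟩ : ℕ+) : ℕ) - r else 0

/-- The canonical element of `I` sending `(1, …, r)` to a given tuple. -/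
def tupFun {r : ℕ} (t : Idx r) : ℕ+ → ℕ+ := fun n =>
  if h : (n : ℕ) ≤ r then t.1 ⟨(n : ℕ) - 1, by have := pnat_coe_one_le n; omega⟩
  else ⟨(n : ℕ) + tShift t, by have := pnat_coe_one_le n; omega⟩

lemma tupFun_le {r : ℕ} (t : Idx r) (n : ℕ+) (h : (n : ℕ) ≤ r) :
    ((t.1 ⟨(n : ℕ) - 1, by have := pnat_coe_one_le n; omega⟩ : ℕ+) : ℕ) ≤ r + tShift t := by
  have hr : 0 < r := by have := pnat_coe_one_le n; omega
  have hle : t.1 ⟨(n : ℕ) - 1, by have := pnat_coe_one_le n; omega⟩ ≤ t.1 ⟨r - 1, by omega⟩ :=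
    t.2.monotone (by simp [Fin.le_def]; omega)
  have hge := idx_ge t (r - 1) (by omega)
  rw [← PNat.coe_le_coe] at hle
  unfold tShift
  rw [dif_pos hr]
  omega

lemma tupFun_strictMono {r : ℕ} (t : Idx r) : StrictMono (tupFun t) := by
  intro p q hpq
  have hp := pnat_coe_one_le p
  have hq := pnat_coe_one_le q
  rw [← PNat.coe_lt_coe] at hpq
  have e1 : ∀ (n : ℕ+) (h : (n : ℕ) ≤ r),
      tupFun t n = t.1 ⟨(n : ℕ) - 1, by have := pnat_coe_one_le n; omega⟩ :=
    fun n h => dif_pos h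
  have e2 : ∀ (n : ℕ+) (h : ¬ (n : ℕ) ≤ r),
      tupFun t n = ⟨(n : ℕ) + tShift t, by have := pnat_coe_one_le n; omega⟩ :=
    fun n h => dif_neg h
  by_cases h1 : (p : ℕ) ≤ r <;> by_cases h2 : (q : ℕ) ≤ r
  · rw [e1 p h1, e1 q h2]
    exact t.2 (Fin.mk_lt_mk.2 (by omega))
  · rw [e1 p h1, e2 q h2]
    have := tupFun_le t p h1
    apply (PNat.coe_lt_coe _ _).1
    show ((t.1 ⟨(p : ℕ) - 1, by have := pnat_coe_one_le p; omega⟩ : ℕ+) : ℕ)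
      < (q : ℕ) + tShift t
    omega
  · omega
  · rw [e2 p h1, e2 q h2]
    apply (PNat.coe_lt_coe _ _).1
    show (p : ℕ) + tShift t < (q : ℕ) + tShift t
    omega

lemma tupFun_mem {r : ℕ} (t : Idx r) : tupFun t ∈ IncMonoid := by
  refine ⟨tupFun_strictMono t, tShift t, ⟨r + 1, Nat.succ_pos r⟩, fun n hn => ?_⟩
  have hn2 : r + 1 ≤ (n : ℕ) := hn
  have hn' : ¬ (n : ℕ) ≤ r := by omega
  unfold tupFun
  exact congrArg Subtype.val (dif_neg hn')

/-- The canonical element of `I` sending `(1, …, r)` to a given tuple, in `IncM`. -/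
def sigmaT {r : ℕ} (t : Idx r) : IncM := ⟨tupFun t, tupFun_mem t⟩

lemma sigmaT_spec {r : ℕ} (t : Idx r) : idxAct (sigmaT t) (iotaIdx r) = t := by
  apply Subtype.ext
  funext i
  show tupFun t ((iotaIdx r).1 i) = t.1 i
  have hco : (((iotaIdx r).1 i : ℕ+) : ℕ) = (i : ℕ) + 1 := rfl
  have hle : (((iotaIdx r).1 i : ℕ+) : ℕ) ≤ r := by rw [hco]; omega
  unfold tupFun
  refine (dif_pos hle).trans ?_
  congr 1

lemma agree_of_idxAct {r : ℕ} (τ₁ τ₂ : IncM)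
    (h : idxAct τ₁ (iotaIdx r) = idxAct τ₂ (iotaIdx r)) :
    ∀ n : ℕ+, (n : ℕ) ≤ r → τ₁.1 n = τ₂.1 n := by
  intro n hn
  have hn1 := pnat_coe_one_le n
  have h2 := congrArg Subtype.val h
  have h3 := congrFun h2 ⟨(n : ℕ) - 1, by omega⟩
  have h4 : (iotaIdx r).1 ⟨(n : ℕ) - 1, by omega⟩ = n := by
    apply PNat.coe_injective
    show (n : ℕ) - 1 + 1 = (n : ℕ)
    omega
  have h5 : τ₁.1 ((iotaIdx r).1 ⟨(n : ℕ) - 1, by omega⟩)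
      = τ₂.1 ((iotaIdx r).1 ⟨(n : ℕ) - 1, by omega⟩) := h3
  rwa [h4] at h5

lemma key_smul_c {k : Type*} [Field k] {r : ℕ} {M : Type*} [AddCommGroup M]
    [Module (IncAlg k) M] (x : M) (hx : ∀ σ ∈ Igt r, ofInc k σ • x = x)
    (τ₁ τ₂ : IncM) (h : idxAct τ₁ (iotaIdx r) = idxAct τ₂ (iotaIdx r)) (c : k) :
    (MonoidAlgebra.single τ₁ c : IncAlg k) • x = (MonoidAlgebra.single τ₂ c : IncAlg k) • x := by
  have hkey : ofInc k τ₁ • x = ofInc k τ₂ • x :=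
    key_smul x hx τ₁ τ₂ (agree_of_idxAct τ₁ τ₂ h)
  have e₁ : (MonoidAlgebra.single τ₁ c : IncAlg k)
      = (MonoidAlgebra.single (1 : IncM) c : IncAlg k)
        * (MonoidAlgebra.single τ₁ 1 : IncAlg k) := by
    rw [MonoidAlgebra.single_mul_single, one_mul, mul_one]
  have e₂ : (MonoidAlgebra.single τ₂ c : IncAlg k)
      = (MonoidAlgebra.single (1 : IncM) c : IncAlg k)
        * (MonoidAlgebra.single τ₂ 1 : IncAlg k) := by
    rw [MonoidAlgebra.single_mul_single, one_mul, mul_one]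
  have hof : ∀ τ : IncM, ofInc k τ = (MonoidAlgebra.single τ 1 : IncAlg k) := fun τ => rfl
  rw [e₁, e₂, mul_smul, mul_smul, ← hof, ← hof, hkey]

lemma prinRep_apply (k : Type*) [Field k] (r : ℕ) (σ : IncM) (w : Idx r →₀ k) :
    prinRep k r σ w = Finsupp.mapDomain (idxAct σ) w := rfl

/-- Universal property of the principal module `A^r`: for any
`k[I]`-module `M` and any `x ∈ M` fixed by `I_{>r}`, there is a unique `k[I]`-linear
map `f : A^r → M` with `f(e_{1,…,r}) = x`. -/
theorem principal_module_universal_property (k : Type*) [Field k] (r : ℕ)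
    (M : Type*) [AddCommGroup M] [Module (IncAlg k) M] (x : M)
    (hx : ∀ σ ∈ Igt r, ofInc k σ • x = x) :
    ∃! f : PrinMod k r →ₗ[IncAlg k] M, f (ePrin k (iotaIdx r)) = x := by
  classical
  -- the underlying function of the desired linear map
  set f₀ : (Idx r →₀ k) → M :=
    fun v => v.sum fun t c => (MonoidAlgebra.single (sigmaT t) c : IncAlg k) • x with hf₀
  have h0 : ∀ t : Idx r, (MonoidAlgebra.single (sigmaT t) (0 : k) : IncAlg k) • x = 0 := by
    intro t
    rw [MonoidAlgebra.single_zero]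
    exact zero_smul _ x
  have f₀_add : ∀ v w : Idx r →₀ k, f₀ (v + w) = f₀ v + f₀ w := by
    intro v w
    exact Finsupp.sum_add_index' h0 (fun t c d => by
      rw [MonoidAlgebra.single_add, add_smul])
  have f₀_zero : f₀ 0 = 0 := Finsupp.sum_zero_index
  have f₀_single : ∀ (t : Idx r) (c : k),
      f₀ (Finsupp.single t c) = (MonoidAlgebra.single (sigmaT t) c : IncAlg k) • x :=
    fun t c => Finsupp.sum_single_index (h0 t)
  -- equivariance of `f₀` for a single algebra generator
  have hsingle : ∀ (σ : IncM) (s : k) (w : Idx r →₀ k),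
      f₀ ((prinRep k r).asAlgebraHom (MonoidAlgebra.single σ s) w)
        = (MonoidAlgebra.single σ s : IncAlg k) • f₀ w := by
    intro σ s w
    induction w using Finsupp.induction with
    | zero => rw [map_zero, f₀_zero, smul_zero]
    | single_add t c w' hts hc ih =>
        rw [map_add, f₀_add, f₀_add, ih, smul_add]
        congr 1
        have h1 : (prinRep k r).asAlgebraHom (MonoidAlgebra.single σ s) (Finsupp.single t c)
            = Finsupp.single (idxAct σ t) (s * c) := by
          rw [Representation.asAlgebraHom_single, LinearMap.smul_apply, prinRep_apply,
            Finsupp.mapDomain_single, Finsupp.smul_single, smul_eq_mul]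
        rw [h1, f₀_single, f₀_single, smul_smul, MonoidAlgebra.single_mul_single]
        have hact : idxAct (sigmaT (idxAct σ t)) (iotaIdx r)
            = idxAct (σ * sigmaT t) (iotaIdx r) := by
          rw [sigmaT_spec]
          show idxAct σ t = idxAct σ (idxAct (sigmaT t) (iotaIdx r))
          rw [sigmaT_spec]
        exact key_smul_c x hx _ _ hact (s * c)
  -- equivariance of `f₀`
  have hsmul : ∀ (a : IncAlg k) (w : Idx r →₀ k),
      f₀ ((prinRep k r).asAlgebraHom a w) = a • f₀ w := by
    intro a w
    induction a using MonoidAlgebra.induction with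
    | zero => rw [map_zero, LinearMap.zero_apply, f₀_zero, zero_smul]
    | single_add σ s a' hσ hs ih =>
        rw [map_add, LinearMap.add_apply, f₀_add, ih, add_smul, hsingle]
  -- the linear map `F`
  let F : PrinMod k r →ₗ[IncAlg k] M :=
    { toFun := fun v => f₀ ((prinRep k r).asModuleEquiv v)
      map_add' := fun v w => by
        show f₀ ((prinRep k r).asModuleEquiv (v + w))
          = f₀ ((prinRep k r).asModuleEquiv v) + f₀ ((prinRep k r).asModuleEquiv w)
        rw [map_add, f₀_add]
      map_smul' := fun a v => by
        show f₀ ((prinRep k r).asModuleEquiv (a • v))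
          = (RingHom.id (IncAlg k)) a • f₀ ((prinRep k r).asModuleEquiv v)
        rw [RingHom.id_apply, Representation.asModuleEquiv_map_smul]
        exact hsmul a _ }
  have hF : F (ePrin k (iotaIdx r)) = x := by
    show f₀ ((prinRep k r).asModuleEquiv (ePrin k (iotaIdx r))) = x
    unfold ePrin
    rw [LinearEquiv.apply_symm_apply, f₀_single]
    have hact : idxAct (sigmaT (iotaIdx r)) (iotaIdx r)
        = idxAct (1 : IncM) (iotaIdx r) := by
      rw [sigmaT_spec]
      rfl
    rw [key_smul_c x hx _ _ hact 1,
      show (MonoidAlgebra.single (1 : IncM) (1 : k) : IncAlg k) = 1 from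
        MonoidAlgebra.one_def.symm, one_smul]
  refine ⟨F, hF, ?_⟩
  intro g hg
  have hw : ∀ w : Idx r →₀ k,
      g ((prinRep k r).asModuleEquiv.symm w) = F ((prinRep k r).asModuleEquiv.symm w) := by
    intro w
    induction w using Finsupp.induction with
    | zero => simp only [map_zero]
    | single_add t c w' hts hc ih =>
        rw [map_add, map_add, map_add, ih]
        congr 1
        have hsingle' : ((prinRep k r).asModuleEquiv.symm (Finsupp.single t c) : PrinMod k r)
            = (MonoidAlgebra.single (sigmaT t) c : IncAlg k) • ePrin k (iotaIdx r) := by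
          apply (prinRep k r).asModuleEquiv.injective
          rw [LinearEquiv.apply_symm_apply, Representation.asModuleEquiv_map_smul]
          unfold ePrin
          rw [LinearEquiv.apply_symm_apply, Representation.asAlgebraHom_single,
            LinearMap.smul_apply, prinRep_apply, Finsupp.mapDomain_single, sigmaT_spec,
            Finsupp.smul_single, smul_eq_mul, mul_one]
        rw [hsingle', map_smul, map_smul, hg, hF]
  apply LinearMap.ext
  intro v
  have hv := hw ((prinRep k r).asModuleEquiv v)
  rwa [LinearEquiv.symm_apply_apply] at hv

end
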